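/- (Orthogonality of eigenfunctions on (s0,b).) Let s0 ≤ b with b ∈ I, let r : I → ℝ be continuous on [s0,b], and let a1, a2, b1, b2 be real numbers with |a1| + |a2| ≠ 0 and |b1| + |b2| ≠ 0. Suppose λ1, λ2 ∈ ℂ with λ1 ≠ λ2, and φ1, φ2 : I → ℂ belong to L²_β(s0,b), are continuous and differentiable at s0, have D_β φj differentiable at s0 and D_β φj, D_{β^{-1}}D_β φj bounded on {β^k(b) : k ∈ ℕ₀} ∪ {s0}, satisfy ℓ_β φj(t) = λj·φj(t) for all t in {β^k(b) : k ∈ ℕ₀} ∪ {s0}, the boundary conditions a1·φj(s0) + a2·(D_{β^{-1}}φj)(s0) = 0 and b1·φj(b) + b2·(D_{β^{-1}}φj)(b) = 0, and ∫_{s0}^{b} |φj|² d_β > 0, for j = 1, 2. Then ⟨φ1, φ2⟩ = ∫_{s0}^{b} φ1(t)·conj(φ2(t)) d_β t = 0. -/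

import Mathlib

open Function Set ComplexConjugate

/-- The β-derivative `D_β f` of `f : ℝ → ℂ`:
`(f (β t) - f t) / (β t - t)` for `t ≠ s0`, and `f' s0` at `t = s0`. -/
noncomputable def Dq (β : ℝ → ℝ) (s0 : ℝ) (f : ℝ → ℂ) (t : ℝ) : ℂ :=
  if t = s0 then deriv f s0 else (f (β t) - f t) / ((β t : ℂ) - (t : ℂ))

/-- The β-integral `∫_{s0}^{x} f d_β = ∑_{k} (β^k x - β^{k+1} x) f (β^k x)` (complex-valued). -/
noncomputable def betaInt (β : ℝ → ℝ) (x : ℝ) (f : ℝ → ℂ) : ℂ :=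
  ∑' k : ℕ, ((β^[k] x - β^[k + 1] x : ℝ) : ℂ) * f (β^[k] x)

/-- The β-integral `∫_{s0}^{x} f d_β` for a real-valued integrand. -/
noncomputable def betaIntR (β : ℝ → ℝ) (x : ℝ) (f : ℝ → ℝ) : ℝ :=
  ∑' k : ℕ, (β^[k] x - β^[k + 1] x) * f (β^[k] x)

/-- `∫_a^b f d_β := ∫_{s0}^b f d_β - ∫_{s0}^a f d_β`. -/
noncomputable def betaIntAB (β : ℝ → ℝ) (a b : ℝ) (f : ℝ → ℂ) : ℂ :=
  betaInt β b f - betaInt β a f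

/-- `∫_a^b f d_β` for a real-valued integrand. -/
noncomputable def betaIntRAB (β : ℝ → ℝ) (a b : ℝ) (f : ℝ → ℝ) : ℝ :=
  betaIntR β b f - betaIntR β a f

/-- `D_β β⁻¹`, viewed as a complex-valued function. -/
noncomputable def DbinvC (β βinv : ℝ → ℝ) (s0 : ℝ) : ℝ → ℂ :=
  Dq β s0 fun u => (βinv u : ℂ)

/-- The β-Sturm–Liouville operator
`ℓ_β y (t) = -(D_β β⁻¹)(t) · (D_{β⁻¹} (D_β y))(t) + r t · y t`. -/
noncomputable def ellBeta (β βinv : ℝ → ℝ) (s0 : ℝ) (r : ℝ → ℝ) (y : ℝ → ℂ) (t : ℝ) : ℂ :=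
  -(DbinvC β βinv s0 t) * Dq βinv s0 (Dq β s0 y) t + (r t : ℂ) * y t

/-- The β-Wronskian `[y,z](t) = y t · (D_{β⁻¹} z) t - z t · (D_{β⁻¹} y) t`. -/
noncomputable def wronk (βinv : ℝ → ℝ) (s0 : ℝ) (y z : ℝ → ℂ) (t : ℝ) : ℂ :=
  y t * Dq βinv s0 z t - z t * Dq βinv s0 y t

/-- The β-exponential `e_{p,β}(t) = 1 / ∏_k (1 - p(β^k t)(β^k t - β^{k+1} t))`. -/
noncomputable def ebeta (β : ℝ → ℝ) (p : ℝ → ℂ) (t : ℝ) : ℂ :=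
  1 / ∏' k : ℕ, (1 - p (β^[k] t) * ((β^[k] t - β^[k + 1] t : ℝ) : ℂ))

/-- The β-exponential `E_{p,β}(t) = ∏_k (1 + p(β^k t)(β^k t - β^{k+1} t))`. -/
noncomputable def Ebeta (β : ℝ → ℝ) (p : ℝ → ℂ) (t : ℝ) : ℂ :=
  ∏' k : ℕ, (1 + p (β^[k] t) * ((β^[k] t - β^[k + 1] t : ℝ) : ℂ))

/-- `sin_{p,β}(t) = (e_{ip,β}(t) - e_{-ip,β}(t)) / (2i)`. -/
noncomputable def sinBeta (β : ℝ → ℝ) (p : ℝ → ℂ) (t : ℝ) : ℂ :=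
  (ebeta β (fun s => Complex.I * p s) t - ebeta β (fun s => -(Complex.I * p s)) t) /
    (2 * Complex.I)

/-- `cos_{p,β}(t) = (e_{ip,β}(t) + e_{-ip,β}(t)) / 2`. -/
noncomputable def cosBeta (β : ℝ → ℝ) (p : ℝ → ℂ) (t : ℝ) : ℂ :=
  (ebeta β (fun s => Complex.I * p s) t + ebeta β (fun s => -(Complex.I * p s)) t) / 2

lemma aux_deriv_conj (f : ℝ → ℂ) (x : ℝ) : deriv (fun t => conj (f t)) x = conj (deriv f x) := by
  by_cases h : DifferentiableAt ℝ f x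
  · exact (Complex.conjCLE.hasFDerivAt.comp_hasDerivAt x h.hasDerivAt).deriv
  · rw [deriv_zero_of_not_differentiableAt h, deriv_zero_of_not_differentiableAt, map_zero]
    intro h'
    have h3 := Complex.conjCLE.differentiableAt.comp x h'
    have h2 : (⇑Complex.conjCLE ∘ fun t => conj (f t)) = f := by
      funext t; simp [Complex.conjCLE_apply]
    rw [h2] at h3; exact h h3

lemma aux_Dq_conj (γ : ℝ → ℝ) (s0 : ℝ) (f : ℝ → ℂ) :
    Dq γ s0 (fun u => conj (f u)) = fun u => conj (Dq γ s0 f u) := by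
  funext u; unfold Dq
  by_cases hu : u = s0
  · rw [if_pos hu, if_pos hu, aux_deriv_conj]
  · rw [if_neg hu, if_neg hu, map_div₀, map_sub, map_sub, Complex.conj_ofReal,
      Complex.conj_ofReal]

lemma aux_DbinvC_conj (β βinv : ℝ → ℝ) (s0 : ℝ) (u : ℝ) :
    conj (DbinvC β βinv s0 u) = DbinvC β βinv s0 u := by
  have h := congrFun (aux_Dq_conj β s0 (fun u => ((βinv u : ℝ) : ℂ))) u
  simp only [Complex.conj_ofReal] at h
  exact h.symm

lemma aux_ell_conj (β βinv : ℝ → ℝ) (s0 : ℝ) (r : ℝ → ℝ) (y : ℝ → ℂ) (u : ℝ) :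
    ellBeta β βinv s0 r (fun x => conj (y x)) u = conj (ellBeta β βinv s0 r y u) := by
  unfold ellBeta
  rw [aux_Dq_conj β s0 y, aux_Dq_conj βinv s0 (Dq β s0 y), map_add, map_mul, map_mul, map_neg,
    aux_DbinvC_conj, Complex.conj_ofReal]

lemma aux_det0 (c1 c2 : ℝ) (hc : |c1| + |c2| ≠ 0) (A B C D : ℂ)
    (h1 : (c1 : ℂ) * A + (c2 : ℂ) * B = 0) (h2 : (c1 : ℂ) * C + (c2 : ℂ) * D = 0) :
    A * D - C * B = 0 := by
  by_cases h : c2 = 0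
  · subst h
    have hc1 : (c1 : ℂ) ≠ 0 := by
      simp only [abs_zero, add_zero] at hc
      exact_mod_cast fun h0 => hc (by rw [h0, abs_zero])
    simp only [Complex.ofReal_zero, zero_mul, add_zero] at h1 h2
    have hA : A = 0 := by
      rcases mul_eq_zero.mp h1 with h' | h'
      · exact absurd h' hc1
      · exact h'
    have hC : C = 0 := by
      rcases mul_eq_zero.mp h2 with h' | h'
      · exact absurd h' hc1
      · exact h'
    rw [hA, hC]; ring
  · have hc2 : (c2 : ℂ) ≠ 0 := Complex.ofReal_ne_zero.mpr h
    have hB : B = -((c1 : ℂ) * A) / c2 := by field_simp; linear_combination h1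
    have hD : D = -((c1 : ℂ) * C) / c2 := by field_simp; linear_combination h2
    rw [hB, hD]; field_simp; ring

lemma aux_pt (β βinv : ℝ → ℝ) (s0 : ℝ) (r : ℝ → ℝ) (y z : ℝ → ℂ) (μ ν : ℂ)
    (uu tt vv : ℝ) (hu : uu ≠ s0) (ht : tt ≠ s0) (hv : vv ≠ s0)
    (hut : uu ≠ tt) (htv : tt ≠ vv)
    (hbu : β uu = tt) (hbt : β tt = vv) (hiu : βinv tt = uu) (hiv : βinv vv = tt)
    (hey : ellBeta β βinv s0 r y tt = μ * y tt)
    (hez : ellBeta β βinv s0 r z tt = ν * z tt) :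
    ((tt : ℂ) - (vv : ℂ)) * ((μ - ν) * (y tt * z tt))
      = wronk βinv s0 y z tt - wronk βinv s0 y z vv := by
  have h1 : ((uu : ℂ) - (tt : ℂ)) ≠ 0 := sub_ne_zero_of_ne (by exact_mod_cast hut)
  have h2 : ((vv : ℂ) - (tt : ℂ)) ≠ 0 :=
    sub_ne_zero_of_ne (by exact_mod_cast htv.symm)
  have h1' : ((tt : ℂ) - (uu : ℂ)) ≠ 0 := sub_ne_zero_of_ne (by exact_mod_cast hut.symm)
  have h2' : ((tt : ℂ) - (vv : ℂ)) ≠ 0 := sub_ne_zero_of_ne (by exact_mod_cast htv)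
  simp only [ellBeta, DbinvC, Dq, hbt, hiv, hiu, hbu, if_neg ht, if_neg hu, if_neg hv] at hey hez
  simp only [wronk, Dq, hiu, hiv, if_neg ht, if_neg hv]
  rw [show (μ - ν) * (y tt * z tt) = z tt * (μ * y tt) - y tt * (ν * z tt) by ring,
    ← hey, ← hez]
  field_simp
  ring

theorem stmt_9
    (I : Set ℝ) (hIconn : I.OrdConnected)
    (β βinv : ℝ → ℝ) (s0 : ℝ)
    (hmono : StrictMonoOn β I) (hcont : ContinuousOn β I)
    (hbij : Set.BijOn β I I) (hinv : Set.InvOn βinv β I I)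
    (hs0I : s0 ∈ I) (hfix : β s0 = s0)
    (hsign : ∀ t ∈ I, (t - s0) * (β t - t) ≤ 0)
    (huniq : ∀ t ∈ I, (t - s0) * (β t - t) = 0 → t = s0)
    (b : ℝ) (hb : b ∈ I) (hs0b : s0 ≤ b)
    (r : ℝ → ℝ) (hr : ContinuousOn r (Set.Icc s0 b))
    (a1 a2 b1 b2 : ℝ) (ha12 : |a1| + |a2| ≠ 0) (hb12 : |b1| + |b2| ≠ 0)
    (lam1 lam2 : ℂ) (hlam : lam1 ≠ lam2) (phi1 phi2 : ℝ → ℂ)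
    (hphi1L2 : Summable fun j : ℕ => (β^[j] b - β^[j + 1] b) * ‖phi1 (β^[j] b)‖ ^ 2)
    (hphi1c : ContinuousAt phi1 s0) (hphi1d : DifferentiableAt ℝ phi1 s0)
    (hDphi1d : DifferentiableAt ℝ (Dq β s0 phi1) s0)
    (hDphi1b : ∃ C, ∀ t ∈ insert s0 (Set.range fun j : ℕ => β^[j] b), ‖Dq β s0 phi1 t‖ ≤ C)
    (hDDphi1b : ∃ C, ∀ t ∈ insert s0 (Set.range fun j : ℕ => β^[j] b), ‖Dq βinv s0 (Dq β s0 phi1) t‖ ≤ C)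
    (hphi1eig : ∀ t ∈ insert s0 (Set.range fun j : ℕ => β^[j] b), ellBeta β βinv s0 r phi1 t = lam1 * phi1 t)
    (hphi1bc1 : (a1 : ℂ) * phi1 s0 + (a2 : ℂ) * Dq βinv s0 phi1 s0 = 0)
    (hphi1bc2 : (b1 : ℂ) * phi1 b + (b2 : ℂ) * Dq βinv s0 phi1 b = 0)
    (hphi1pos : 0 < betaIntR β b fun t => ‖phi1 t‖ ^ 2)
    (hphi2L2 : Summable fun j : ℕ => (β^[j] b - β^[j + 1] b) * ‖phi2 (β^[j] b)‖ ^ 2)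
    (hphi2c : ContinuousAt phi2 s0) (hphi2d : DifferentiableAt ℝ phi2 s0)
    (hDphi2d : DifferentiableAt ℝ (Dq β s0 phi2) s0)
    (hDphi2b : ∃ C, ∀ t ∈ insert s0 (Set.range fun j : ℕ => β^[j] b), ‖Dq β s0 phi2 t‖ ≤ C)
    (hDDphi2b : ∃ C, ∀ t ∈ insert s0 (Set.range fun j : ℕ => β^[j] b), ‖Dq βinv s0 (Dq β s0 phi2) t‖ ≤ C)
    (hphi2eig : ∀ t ∈ insert s0 (Set.range fun j : ℕ => β^[j] b), ellBeta β βinv s0 r phi2 t = lam2 * phi2 t)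
    (hphi2bc1 : (a1 : ℂ) * phi2 s0 + (a2 : ℂ) * Dq βinv s0 phi2 s0 = 0)
    (hphi2bc2 : (b1 : ℂ) * phi2 b + (b2 : ℂ) * Dq βinv s0 phi2 b = 0)
    (hphi2pos : 0 < betaIntR β b fun t => ‖phi2 t‖ ^ 2) :
    betaInt β b (fun t => phi1 t * conj (phi2 t)) = 0 := by
    classical
  rcases eq_or_lt_of_le hs0b with hbe | hblt
  · -- degenerate case b = s0: the positivity hypothesis is contradictory
    exfalso
    have hfix' : ∀ k : ℕ, β^[k] b = b := by
      intro k; induction k with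
      | zero => simp
      | succ n ih => rw [Function.iterate_succ_apply', ih, ← hbe, hfix, hbe]
    have hz : betaIntR β b (fun t => ‖phi1 t‖ ^ 2) = 0 := by
      unfold betaIntR
      simp [hfix']
    rw [hz] at hphi1pos; exact lt_irrefl 0 hphi1pos
  -- main case s0 < b
  have hstep : ∀ k : ℕ, β^[k + 1] b = β (β^[k] b) := fun k => Function.iterate_succ_apply' β k b
  have hmem : ∀ k : ℕ, β^[k] b ∈ I := by
    intro k; induction k with
    | zero => simpa using hb
    | succ n ih => rw [hstep]; exact hbij.mapsTo ih
  have hgt : ∀ k : ℕ, s0 < β^[k] b := by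
    intro k; induction k with
    | zero => simpa using hblt
    | succ n ih =>
      rw [hstep]
      have := hmono hs0I (hmem n) ih
      rwa [hfix] at this
  have hne : ∀ k : ℕ, β^[k] b ≠ s0 := fun k => (hgt k).ne'
  have hlt : ∀ k : ℕ, β (β^[k] b) < β^[k] b := by
    intro k; by_contra h; push_neg at h
    have h0 : (β^[k] b - s0) * (β (β^[k] b) - β^[k] b) = 0 :=
      le_antisymm (hsign _ (hmem k)) (mul_nonneg (by linarith [hgt k]) (by linarith))
    exact (hne k) (huniq _ (hmem k) h0)
  have hdec : ∀ k : ℕ, β^[k + 1] b < β^[k] b := by intro k; rw [hstep]; exact hlt k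
  -- limit of the orbit is s0
  have hanti : StrictAnti fun k : ℕ => β^[k] b := strictAnti_nat_of_succ_lt hdec
  have hbdd : BddBelow (Set.range fun k : ℕ => β^[k] b) := by
    refine ⟨s0, ?_⟩; rintro x ⟨k, rfl⟩; exact (hgt k).le
  have hconv : Filter.Tendsto (fun k : ℕ => β^[k] b) Filter.atTop (nhds (⨅ k : ℕ, β^[k] b)) :=
    tendsto_atTop_ciInf hanti.antitone hbdd
  have hLs0 : s0 ≤ ⨅ k : ℕ, β^[k] b := le_ciInf fun k => (hgt k).le
  have hLb : (⨅ k : ℕ, β^[k] b) ≤ b := by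
    have := ciInf_le hbdd 0
    simpa using this
  have hLI : (⨅ k : ℕ, β^[k] b) ∈ I := hIconn.out hs0I hb ⟨hLs0, hLb⟩
  have hLfix : β (⨅ k : ℕ, β^[k] b) = ⨅ k : ℕ, β^[k] b := by
    have htend : Filter.Tendsto (fun k : ℕ => β^[k] b) Filter.atTop
        (nhdsWithin (⨅ k : ℕ, β^[k] b) I) :=
      tendsto_nhdsWithin_iff.mpr ⟨hconv, Filter.Eventually.of_forall fun k => hmem k⟩
    have h1 : Filter.Tendsto (fun k : ℕ => β (β^[k] b)) Filter.atTop
        (nhds (β (⨅ k : ℕ, β^[k] b))) := (hcont _ hLI).tendsto.comp htend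
    have h2 : Filter.Tendsto (fun k : ℕ => β (β^[k] b)) Filter.atTop
        (nhds (⨅ k : ℕ, β^[k] b)) := by
      have h3 := hconv.comp (Filter.tendsto_add_atTop_nat 1)
      have h4 : ((fun k : ℕ => β^[k] b) ∘ fun n => n + 1) = fun k : ℕ => β (β^[k] b) := by
        funext k; simp [Function.comp, hstep]
      rwa [h4] at h3
    exact tendsto_nhds_unique h1 h2
  have hLeq : (⨅ k : ℕ, β^[k] b) = s0 := huniq _ hLI (by rw [hLfix]; ring)
  have hlims0 : Filter.Tendsto (fun k : ℕ => β^[k] b) Filter.atTop (nhds s0) := hLeq ▸ hconv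
  -- inverse function facts
  have hinvI : ∀ x ∈ I, βinv x ∈ I ∧ β (βinv x) = x := by
    intro x hx
    obtain ⟨c, hcI, hcx⟩ := hbij.surjOn hx
    have hcc : βinv x = c := by rw [← hcx, hinv.1 hcI]
    exact ⟨hcc ▸ hcI, by rw [hcc, hcx]⟩
  have hinvne : ∀ k : ℕ, βinv (β^[k] b) ≠ s0 := by
    intro k h
    exact hne k (by rw [← (hinvI _ (hmem k)).2, h, hfix])
  have hinvnex : ∀ k : ℕ, βinv (β^[k] b) ≠ β^[k] b := by
    intro k h
    have h2 := (hinvI _ (hmem k)).2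
    rw [h] at h2
    exact (ne_of_lt (hlt k)) h2
  have hinvstep : ∀ k : ℕ, βinv (β^[k + 1] b) = β^[k] b := by
    intro k; rw [hstep]; exact hinv.1 (hmem k)
  -- shift identity for D_{β⁻¹}
  have hshiftD : ∀ (y : ℝ → ℂ) (k : ℕ), Dq βinv s0 y (β^[k + 1] b) = Dq β s0 y (β^[k] b) := by
    intro y k
    unfold Dq
    rw [if_neg (hne (k + 1)), if_neg (hne k), hinvstep, hstep]
    rw [← neg_sub (y (β^[k] b)), ← neg_sub ((β^[k] b : ℂ)), neg_div_neg_eq]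
  -- Green's formula / telescoping limit
  have green : ∀ (y z : ℝ → ℂ) (μ ν : ℂ),
      (∀ k : ℕ, ellBeta β βinv s0 r y (β^[k] b) = μ * y (β^[k] b)) →
      (∀ k : ℕ, ellBeta β βinv s0 r z (β^[k] b) = ν * z (β^[k] b)) →
      ContinuousAt y s0 → ContinuousAt z s0 →
      ContinuousAt (Dq β s0 y) s0 → ContinuousAt (Dq β s0 z) s0 →
      wronk βinv s0 y z b = 0 →
      y s0 * deriv z s0 - z s0 * deriv y s0 = 0 →
      Filter.Tendsto (fun N : ℕ => ∑ k ∈ Finset.range N,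
        ((β^[k] b - β^[k + 1] b : ℝ) : ℂ) * ((μ - ν) * (y (β^[k] b) * z (β^[k] b))))
        Filter.atTop (nhds 0) := by
    intro y z μ ν hey hez hyc hzc hyD hzD hWb hWs0
    have hterm : ∀ k : ℕ, ((β^[k] b - β^[k + 1] b : ℝ) : ℂ) * ((μ - ν) * (y (β^[k] b) * z (β^[k] b)))
        = wronk βinv s0 y z (β^[k] b) - wronk βinv s0 y z (β^[k + 1] b) := by
      intro k
      have h := aux_pt β βinv s0 r y z μ ν (βinv (β^[k] b)) (β^[k] b) (β^[k + 1] b)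
        (hinvne k) (hne k) (hne (k + 1)) (hinvnex k) (hdec k).ne'
        ((hinvI _ (hmem k)).2) (hstep k).symm rfl (hinvstep k) (hey k) (hez k)
      rw [Complex.ofReal_sub]
      exact h
    have hsum : ∀ N : ℕ, ∑ k ∈ Finset.range N,
        ((β^[k] b - β^[k + 1] b : ℝ) : ℂ) * ((μ - ν) * (y (β^[k] b) * z (β^[k] b)))
        = wronk βinv s0 y z (β^[0] b) - wronk βinv s0 y z (β^[N] b) := by
      intro N
      simp only [hterm]
      exact Finset.sum_range_sub' (fun k => wronk βinv s0 y z (β^[k] b)) N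
    have hWlim : Filter.Tendsto (fun N : ℕ => wronk βinv s0 y z (β^[N] b)) Filter.atTop
        (nhds (y s0 * deriv z s0 - z s0 * deriv y s0)) := by
      rw [← Filter.tendsto_add_atTop_iff_nat 1]
      have hy1 : Filter.Tendsto (fun N : ℕ => y (β^[N + 1] b)) Filter.atTop (nhds (y s0)) :=
        hyc.tendsto.comp (hlims0.comp (Filter.tendsto_add_atTop_nat 1))
      have hz1 : Filter.Tendsto (fun N : ℕ => z (β^[N + 1] b)) Filter.atTop (nhds (z s0)) :=
        hzc.tendsto.comp (hlims0.comp (Filter.tendsto_add_atTop_nat 1))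
      have hy2 : Filter.Tendsto (fun N : ℕ => Dq β s0 y (β^[N] b)) Filter.atTop
          (nhds (deriv y s0)) := by
        have h := hyD.tendsto.comp hlims0
        rwa [show Dq β s0 y s0 = deriv y s0 from if_pos rfl] at h
      have hz2 : Filter.Tendsto (fun N : ℕ => Dq β s0 z (β^[N] b)) Filter.atTop
          (nhds (deriv z s0)) := by
        have h := hzD.tendsto.comp hlims0
        rwa [show Dq β s0 z s0 = deriv z s0 from if_pos rfl] at h
      have : (fun N : ℕ => wronk βinv s0 y z (β^[N + 1] b))
          = fun N : ℕ => y (β^[N + 1] b) * Dq β s0 z (β^[N] b)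
            - z (β^[N + 1] b) * Dq β s0 y (β^[N] b) := by
        funext N; simp only [wronk, hshiftD]
      rw [this]
      exact (hy1.mul hz2).sub (hz1.mul hy2)
    have hW0 : wronk βinv s0 y z (β^[0] b) = 0 := by simpa using hWb
    have hfinal := (tendsto_const_nhds (x := wronk βinv s0 y z (β^[0] b))
      (f := Filter.atTop (α := ℕ))).sub hWlim
    rw [hW0, hWs0, sub_zero] at hfinal
    have hfun : (fun N : ℕ => ∑ k ∈ Finset.range N,
        ((β^[k] b - β^[k + 1] b : ℝ) : ℂ) * ((μ - ν) * (y (β^[k] b) * z (β^[k] b))))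
        = fun N : ℕ => wronk βinv s0 y z (β^[0] b) - wronk βinv s0 y z (β^[N] b) := by
      funext N; exact hsum N
    rw [hfun, hW0]
    simpa using hfinal
    -- the conjugate of phi2
  set z2 : ℝ → ℂ := fun x => conj (phi2 x) with hz2def
  have hz2c : ContinuousAt z2 s0 := Complex.continuous_conj.continuousAt.comp hphi2c
  have hz2D : ContinuousAt (Dq β s0 z2) s0 := by
    have : Dq β s0 z2 = fun u => conj (Dq β s0 phi2 u) := aux_Dq_conj β s0 phi2
    rw [this]
    exact Complex.continuous_conj.continuousAt.comp hDphi2d.continuousAt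
  have hz2eig : ∀ k : ℕ, ellBeta β βinv s0 r z2 (β^[k] b) = conj lam2 * z2 (β^[k] b) := by
    intro k
    have h := hphi2eig _ (Set.mem_insert_of_mem _ ⟨k, rfl⟩)
    rw [show ellBeta β βinv s0 r z2 (β^[k] b) = conj (ellBeta β βinv s0 r phi2 (β^[k] b)) from
      aux_ell_conj β βinv s0 r phi2 (β^[k] b), h, map_mul]
  have hphi1eig' : ∀ k : ℕ, ellBeta β βinv s0 r phi1 (β^[k] b) = lam1 * phi1 (β^[k] b) :=
    fun k => hphi1eig _ (Set.mem_insert_of_mem _ ⟨k, rfl⟩)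
  have hphi2eig' : ∀ k : ℕ, ellBeta β βinv s0 r phi2 (β^[k] b) = lam2 * phi2 (β^[k] b) :=
    fun k => hphi2eig _ (Set.mem_insert_of_mem _ ⟨k, rfl⟩)
  have hDqz2 : ∀ u : ℝ, Dq βinv s0 z2 u = conj (Dq βinv s0 phi2 u) :=
    fun u => congrFun (aux_Dq_conj βinv s0 phi2) u
  -- conjugated boundary conditions for z2
  have hz2bc2 : (b1 : ℂ) * z2 b + (b2 : ℂ) * Dq βinv s0 z2 b = 0 := by
    have h := congrArg conj hphi2bc2
    simp only [map_add, map_mul, Complex.conj_ofReal, map_zero] at h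
    rw [hDqz2]; exact h
  have hz2bc1 : (a1 : ℂ) * z2 s0 + (a2 : ℂ) * Dq βinv s0 z2 s0 = 0 := by
    have h := congrArg conj hphi2bc1
    simp only [map_add, map_mul, Complex.conj_ofReal, map_zero] at h
    rw [hDqz2]; exact h
  have hDqs0 : ∀ f : ℝ → ℂ, Dq βinv s0 f s0 = deriv f s0 := fun f => if_pos rfl
  -- boundary Wronskians vanish
  have hWb12 : wronk βinv s0 phi1 z2 b = 0 := by
    unfold wronk
    exact aux_det0 b1 b2 hb12 (phi1 b) (Dq βinv s0 phi1 b) (z2 b) (Dq βinv s0 z2 b)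
      hphi1bc2 hz2bc2
  have hWs012 : phi1 s0 * deriv z2 s0 - z2 s0 * deriv phi1 s0 = 0 := by
    have h1 := hphi1bc1; have h2 := hz2bc1
    rw [hDqs0] at h1 h2
    exact aux_det0 a1 a2 ha12 (phi1 s0) (deriv phi1 s0) (z2 s0) (deriv z2 s0) h1 h2
  have hWb22 : wronk βinv s0 phi2 z2 b = 0 := by
    unfold wronk
    exact aux_det0 b1 b2 hb12 (phi2 b) (Dq βinv s0 phi2 b) (z2 b) (Dq βinv s0 z2 b)
      hphi2bc2 hz2bc2
  have hWs022 : phi2 s0 * deriv z2 s0 - z2 s0 * deriv phi2 s0 = 0 := by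
    have h1 := hphi2bc1; have h2 := hz2bc1
    rw [hDqs0] at h1 h2
    exact aux_det0 a1 a2 ha12 (phi2 s0) (deriv phi2 s0) (z2 s0) (deriv z2 s0) h1 h2
  -- reality of lam2
  have hreal : conj lam2 = lam2 := by
    have hg := green phi2 z2 lam2 (conj lam2) hphi2eig' hz2eig hphi2c hz2c
      hDphi2d.continuousAt hz2D hWb22 hWs022
    have heq : ∀ N : ℕ, ∑ k ∈ Finset.range N,
        ((β^[k] b - β^[k + 1] b : ℝ) : ℂ) * ((lam2 - conj lam2) * (phi2 (β^[k] b) * z2 (β^[k] b)))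
        = (lam2 - conj lam2) *
          ((∑ k ∈ Finset.range N, (β^[k] b - β^[k + 1] b) * ‖phi2 (β^[k] b)‖ ^ 2 : ℝ) : ℂ) := by
      intro N
      push_cast
      rw [Finset.mul_sum]
      refine Finset.sum_congr rfl fun k _ => ?_
      have hmc : phi2 (β^[k] b) * z2 (β^[k] b) = ((‖phi2 (β^[k] b)‖ : ℝ) : ℂ) ^ 2 := by
        rw [hz2def, Complex.mul_conj, Complex.normSq_eq_norm_sq]
        push_cast
        ring
      rw [hmc]
      ring
    have hfun : (fun N : ℕ => ∑ k ∈ Finset.range N,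
        ((β^[k] b - β^[k + 1] b : ℝ) : ℂ) * ((lam2 - conj lam2) * (phi2 (β^[k] b) * z2 (β^[k] b))))
        = fun N : ℕ => (lam2 - conj lam2) *
          ((∑ k ∈ Finset.range N, (β^[k] b - β^[k + 1] b) * ‖phi2 (β^[k] b)‖ ^ 2 : ℝ) : ℂ) := by
      funext N; exact heq N
    rw [hfun] at hg
    have hS : Filter.Tendsto (fun N : ℕ =>
        (∑ k ∈ Finset.range N, (β^[k] b - β^[k + 1] b) * ‖phi2 (β^[k] b)‖ ^ 2 : ℝ))
        Filter.atTop (nhds (betaIntR β b fun t => ‖phi2 t‖ ^ 2)) :=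
      hphi2L2.hasSum.tendsto_sum_nat
    have hS2 : Filter.Tendsto (fun N : ℕ => (lam2 - conj lam2) *
        ((∑ k ∈ Finset.range N, (β^[k] b - β^[k + 1] b) * ‖phi2 (β^[k] b)‖ ^ 2 : ℝ) : ℂ))
        Filter.atTop (nhds ((lam2 - conj lam2) * ((betaIntR β b fun t => ‖phi2 t‖ ^ 2 : ℝ) : ℂ))) :=
      tendsto_const_nhds.mul ((Complex.continuous_ofReal.tendsto _).comp hS)
    have h0 : (lam2 - conj lam2) * ((betaIntR β b fun t => ‖phi2 t‖ ^ 2 : ℝ) : ℂ) = 0 :=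
      tendsto_nhds_unique hS2 hg
    have hSne : ((betaIntR β b fun t => ‖phi2 t‖ ^ 2 : ℝ) : ℂ) ≠ 0 :=
      Complex.ofReal_ne_zero.mpr (ne_of_gt hphi2pos)
    have := (mul_eq_zero.mp h0).resolve_right hSne
    linear_combination -this
  -- lam1 ≠ conj lam2
  have hlamne : lam1 - conj lam2 ≠ 0 := by
    rw [hreal]
    exact sub_ne_zero_of_ne hlam
  -- main application of Green's formula
  have hg := green phi1 z2 lam1 (conj lam2) hphi1eig' hz2eig hphi1c hz2c
    hDphi1d.continuousAt hz2D hWb12 hWs012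
  have hfac : (fun N : ℕ => ∑ k ∈ Finset.range N,
      ((β^[k] b - β^[k + 1] b : ℝ) : ℂ) * ((lam1 - conj lam2) * (phi1 (β^[k] b) * z2 (β^[k] b))))
      = fun N : ℕ => (lam1 - conj lam2) * ∑ k ∈ Finset.range N,
        ((β^[k] b - β^[k + 1] b : ℝ) : ℂ) * (phi1 (β^[k] b) * z2 (β^[k] b)) := by
    funext N
    rw [Finset.mul_sum]
    refine Finset.sum_congr rfl fun k _ => by ring
  rw [hfac] at hg
  have hP : Filter.Tendsto (fun N : ℕ => ∑ k ∈ Finset.range N,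
      ((β^[k] b - β^[k + 1] b : ℝ) : ℂ) * (phi1 (β^[k] b) * z2 (β^[k] b)))
      Filter.atTop (nhds 0) := by
    have h4 := hg.const_mul ((lam1 - conj lam2)⁻¹)
    rw [mul_zero] at h4
    have h5 : (fun N : ℕ => (lam1 - conj lam2)⁻¹ * ((lam1 - conj lam2) * ∑ k ∈ Finset.range N,
        ((β^[k] b - β^[k + 1] b : ℝ) : ℂ) * (phi1 (β^[k] b) * z2 (β^[k] b))))
        = fun N : ℕ => ∑ k ∈ Finset.range N,
          ((β^[k] b - β^[k + 1] b : ℝ) : ℂ) * (phi1 (β^[k] b) * z2 (β^[k] b)) := by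
      funext N; rw [inv_mul_cancel_left₀ hlamne]
    rwa [h5] at h4
  -- conclude
  unfold betaInt
  by_cases hsummable : Summable (fun k : ℕ =>
      ((β^[k] b - β^[k + 1] b : ℝ) : ℂ) * (phi1 (β^[k] b) * conj (phi2 (β^[k] b))))
  · exact tendsto_nhds_unique hsummable.hasSum.tendsto_sum_nat hP
  · exact tsum_eq_zero_of_not_summable hsummable
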